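/- Let X = Σ_{i=1}^n a_i ε_i be a normalized finite Rademacher sum with a_1 ≥ a_2 ≥ ... ≥ a_n > 0, n ≥ 9, and suppose |a_i − 1/3| ≤ 0.07 for each 1 ≤ i ≤ 9. If P(X ≥ 1) < 7/64, then a_1 + a_2 + a_3 < 1. -/

import Mathlib

/-- The probability that a finite Rademacher sum with weights `a` (signs chosen
independently and uniformly from `{-1,+1}`) satisfies the predicate `p`. -/
noncomputable def radProb {ι : Type*} [Fintype ι] (a : ι → ℝ) (p : ℝ → Prop) : ℝ :=
  (Nat.card {ε : ι → Bool | p (∑ i, a i * (if ε i then (1 : ℝ) else -1))}) /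
    2 ^ (Fintype.card ι)


noncomputable def sgn (b : Bool) : ℝ := if b then 1 else -1

noncomputable def wsum {m : ℕ} (c : Fin m → ℝ) (τ : Fin m → Bool) : ℝ :=
  ∑ k, c k * sgn (τ k)

variable {n : ℕ}

def glue (hn : 9 ≤ n) (σ : Fin 9 → Bool) (τ : Fin (n-9) → Bool) : Fin n → Bool :=
  fun i => if h : (i : ℕ) < 9 then σ ⟨i, h⟩ else τ ⟨(i : ℕ) - 9, by omega⟩

def restr (hn : 9 ≤ n) (ε : Fin n → Bool) : Fin 9 → Bool :=
  fun j => ε (Fin.castLE hn j)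

def tl (hn : 9 ≤ n) (ε : Fin n → Bool) : Fin (n-9) → Bool :=
  fun k => ε ⟨9 + (k : ℕ), by omega⟩

lemma restr_glue (hn : 9 ≤ n) (σ : Fin 9 → Bool) (τ : Fin (n-9) → Bool) :
    restr hn (glue hn σ τ) = σ := by
  funext j
  simp only [restr, glue, Fin.castLE]
  rw [dif_pos j.2]

lemma tl_glue (hn : 9 ≤ n) (σ : Fin 9 → Bool) (τ : Fin (n-9) → Bool) :
    tl hn (glue hn σ τ) = τ := by
  funext k
  simp only [tl, glue]
  rw [dif_neg (by omega)]
  congr 1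
  exact Fin.ext (by simp)

lemma glue_restr_tl (hn : 9 ≤ n) (ε : Fin n → Bool) :
    glue hn (restr hn ε) (tl hn ε) = ε := by
  funext i
  simp only [glue, restr, tl]
  split
  · rfl
  · congr 1
    exact Fin.ext (by simp; omega)

lemma sum_split (hn : 9 ≤ n) (g : Fin n → ℝ) :
    ∑ i, g i = (∑ j : Fin 9, g (Fin.castLE hn j)) + ∑ k : Fin (n-9), g ⟨9 + (k : ℕ), by omega⟩ := by
  classical
  set G : ℕ → ℝ := fun m => if h : m < n then g ⟨m, h⟩ else 0 with hG
  have h1 : ∑ i, g i = ∑ i ∈ Finset.range n, G i := by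
    rw [← Fin.sum_univ_eq_sum_range]
    exact Finset.sum_congr rfl fun i _ => by simp [hG, i.2]
  have h2 : ∑ j : Fin 9, g (Fin.castLE hn j) = ∑ i ∈ Finset.range 9, G i := by
    rw [← Fin.sum_univ_eq_sum_range]
    exact Finset.sum_congr rfl fun j _ => by
      simp only [hG]
      rw [dif_pos (lt_of_lt_of_le j.2 hn)]
      rfl
  have h3 : ∑ k : Fin (n-9), g ⟨9 + (k : ℕ), by omega⟩ = ∑ i ∈ Finset.Ico 9 n, G i := by
    rw [Finset.sum_Ico_eq_sum_range, ← Fin.sum_univ_eq_sum_range]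
    exact Finset.sum_congr rfl fun k _ => by
      simp only [hG]
      rw [dif_pos (by omega : 9 + (k:ℕ) < n)]
  rw [h1, h2, h3, Finset.range_eq_Ico, ← Finset.sum_Ico_consecutive _ (by omega : 0 ≤ 9) hn]
  rw [Finset.range_eq_Ico]

lemma wsum_glue (hn : 9 ≤ n) (a : Fin n → ℝ) (σ : Fin 9 → Bool) (τ : Fin (n-9) → Bool) :
    wsum a (glue hn σ τ) =
      wsum (fun j => a (Fin.castLE hn j)) σ + wsum (fun k => a ⟨9 + (k : ℕ), by omega⟩) τ := by
  have e1 : ∀ j : Fin 9, glue hn σ τ (Fin.castLE hn j) = σ j :=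
    fun j => congrFun (restr_glue hn σ τ) j
  have e2 : ∀ k : Fin (n-9), glue hn σ τ ⟨9 + (k : ℕ), by omega⟩ = τ k :=
    fun k => congrFun (tl_glue hn σ τ) k
  unfold wsum
  rw [sum_split hn]
  refine congrArg₂ (· + ·) ?_ ?_
  · exact Finset.sum_congr rfl fun j _ => by rw [e1 j]
  · exact Finset.sum_congr rfl fun k _ => by rw [e2 k]

lemma wsum_flip {m : ℕ} (c : Fin m → ℝ) (τ : Fin m → Bool) :
    wsum c (fun k => !(τ k)) = - wsum c τ := by
  unfold wsum
  rw [← Finset.sum_neg_distrib]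
  exact Finset.sum_congr rfl fun k _ => by cases h : τ k <;> simp [sgn, h]

open scoped Classical in
noncomputable def cnt (hn : 9 ≤ n) (a : Fin n → ℝ) (σ : Fin 9 → Bool) : ℕ :=
  (Finset.univ.filter fun τ : Fin (n-9) → Bool => 1 ≤ wsum a (glue hn σ τ)).card

open scoped Classical in
lemma cnt_pair (hn : 9 ≤ n) (a : Fin n → ℝ) {σ σ' : Fin 9 → Bool}
    (h2 : 2 ≤ wsum (fun j => a (Fin.castLE hn j)) σ + wsum (fun j => a (Fin.castLE hn j)) σ') :
    2^(n-9) ≤ cnt hn a σ + cnt hn a σ' := by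
  have key : ∀ τ : Fin (n-9) → Bool,
      1 ≤ wsum a (glue hn σ τ) ∨ 1 ≤ wsum a (glue hn σ' (fun k => !(τ k))) := by
    intro τ
    by_cases h : 1 ≤ wsum a (glue hn σ τ)
    · exact Or.inl h
    · right
      rw [wsum_glue hn a σ', wsum_flip]
      rw [wsum_glue hn a σ] at h
      push_neg at h
      linarith
  have hsub : (Finset.univ : Finset (Fin (n-9) → Bool)) ⊆
      (Finset.univ.filter fun τ => 1 ≤ wsum a (glue hn σ τ)) ∪
      ((Finset.univ.filter fun τ => 1 ≤ wsum a (glue hn σ' τ)).image fun τ k => !(τ k)) := by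
    intro τ _
    rcases key τ with h | h
    · exact Finset.mem_union_left _ (Finset.mem_filter.2 ⟨Finset.mem_univ _, h⟩)
    · refine Finset.mem_union_right _ (Finset.mem_image.2
        ⟨fun k => !(τ k), Finset.mem_filter.2 ⟨Finset.mem_univ _, h⟩, ?_⟩)
      funext k; simp
  have hcard : (Finset.univ : Finset (Fin (n-9) → Bool)).card = 2^(n-9) := by
    simp [Finset.card_univ]
  calc 2^(n-9) = (Finset.univ : Finset (Fin (n-9) → Bool)).card := hcard.symm
    _ ≤ _ := Finset.card_le_card hsub
    _ ≤ _ + _ := Finset.card_union_le _ _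
    _ ≤ cnt hn a σ + cnt hn a σ' := by
        unfold cnt
        exact Nat.add_le_add le_rfl (Finset.card_image_le)

open scoped Classical in
lemma cnt_fiber (hn : 9 ≤ n) (a : Fin n → ℝ) (σ : Fin 9 → Bool) :
    ((Finset.univ.filter fun ε : Fin n → Bool => 1 ≤ wsum a ε).filter
      fun ε => restr hn ε = σ).card = cnt hn a σ := by
  unfold cnt
  refine (Finset.card_bij (fun τ _ => glue hn σ τ) ?_ ?_ ?_).symm
  · intro τ hτ
    simp only [Finset.mem_filter, Finset.mem_univ, true_and] at hτ ⊢
    exact ⟨hτ, restr_glue hn σ τ⟩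
  · intro τ1 h1 τ2 h2 heq
    have := congrArg (tl hn) heq
    rwa [tl_glue, tl_glue] at this
  · intro ε hε
    simp only [Finset.mem_filter, Finset.mem_univ, true_and] at hε
    have hg : glue hn σ (tl hn ε) = ε := by
      have h := glue_restr_tl hn ε
      rwa [hε.2] at h
    refine ⟨tl hn ε, ?_, hg⟩
    simp only [Finset.mem_filter, Finset.mem_univ, true_and]
    rw [hg]
    exact hε.1

open scoped Classical in
lemma total_count (hn : 9 ≤ n) (a : Fin n → ℝ) :
    (Finset.univ.filter fun ε : Fin n → Bool => 1 ≤ wsum a ε).card =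
      ∑ σ : Fin 9 → Bool, cnt hn a σ := by
  rw [Finset.card_eq_sum_card_fiberwise
    (f := restr hn) (t := Finset.univ) (fun x _ => Finset.mem_univ _)]
  exact Finset.sum_congr rfl fun σ _ => cnt_fiber hn a σ


@[simp] lemma sgn_true : sgn true = 1 := rfl
@[simp] lemma sgn_false : sgn false = -1 := rfl

@[simp] lemma finsucc_1_0 : Fin.succ ((0 : Fin 1)) = (1 : Fin 2) := rfl
@[simp] lemma finsucc_2_0 : Fin.succ ((0 : Fin 2)) = (1 : Fin 3) := rfl
@[simp] lemma finsucc_2_1 : Fin.succ ((1 : Fin 2)) = (2 : Fin 3) := rfl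
@[simp] lemma finsucc_3_0 : Fin.succ ((0 : Fin 3)) = (1 : Fin 4) := rfl
@[simp] lemma finsucc_3_1 : Fin.succ ((1 : Fin 3)) = (2 : Fin 4) := rfl
@[simp] lemma finsucc_3_2 : Fin.succ ((2 : Fin 3)) = (3 : Fin 4) := rfl
@[simp] lemma finsucc_4_0 : Fin.succ ((0 : Fin 4)) = (1 : Fin 5) := rfl
@[simp] lemma finsucc_4_1 : Fin.succ ((1 : Fin 4)) = (2 : Fin 5) := rfl
@[simp] lemma finsucc_4_2 : Fin.succ ((2 : Fin 4)) = (3 : Fin 5) := rfl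
@[simp] lemma finsucc_4_3 : Fin.succ ((3 : Fin 4)) = (4 : Fin 5) := rfl
@[simp] lemma finsucc_5_0 : Fin.succ ((0 : Fin 5)) = (1 : Fin 6) := rfl
@[simp] lemma finsucc_5_1 : Fin.succ ((1 : Fin 5)) = (2 : Fin 6) := rfl
@[simp] lemma finsucc_5_2 : Fin.succ ((2 : Fin 5)) = (3 : Fin 6) := rfl
@[simp] lemma finsucc_5_3 : Fin.succ ((3 : Fin 5)) = (4 : Fin 6) := rfl
@[simp] lemma finsucc_5_4 : Fin.succ ((4 : Fin 5)) = (5 : Fin 6) := rfl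
@[simp] lemma finsucc_6_0 : Fin.succ ((0 : Fin 6)) = (1 : Fin 7) := rfl
@[simp] lemma finsucc_6_1 : Fin.succ ((1 : Fin 6)) = (2 : Fin 7) := rfl
@[simp] lemma finsucc_6_2 : Fin.succ ((2 : Fin 6)) = (3 : Fin 7) := rfl
@[simp] lemma finsucc_6_3 : Fin.succ ((3 : Fin 6)) = (4 : Fin 7) := rfl
@[simp] lemma finsucc_6_4 : Fin.succ ((4 : Fin 6)) = (5 : Fin 7) := rfl
@[simp] lemma finsucc_6_5 : Fin.succ ((5 : Fin 6)) = (6 : Fin 7) := rfl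
@[simp] lemma finsucc_7_0 : Fin.succ ((0 : Fin 7)) = (1 : Fin 8) := rfl
@[simp] lemma finsucc_7_1 : Fin.succ ((1 : Fin 7)) = (2 : Fin 8) := rfl
@[simp] lemma finsucc_7_2 : Fin.succ ((2 : Fin 7)) = (3 : Fin 8) := rfl
@[simp] lemma finsucc_7_3 : Fin.succ ((3 : Fin 7)) = (4 : Fin 8) := rfl
@[simp] lemma finsucc_7_4 : Fin.succ ((4 : Fin 7)) = (5 : Fin 8) := rfl
@[simp] lemma finsucc_7_5 : Fin.succ ((5 : Fin 7)) = (6 : Fin 8) := rfl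
@[simp] lemma finsucc_7_6 : Fin.succ ((6 : Fin 7)) = (7 : Fin 8) := rfl
@[simp] lemma finsucc_8_0 : Fin.succ ((0 : Fin 8)) = (1 : Fin 9) := rfl
@[simp] lemma finsucc_8_1 : Fin.succ ((1 : Fin 8)) = (2 : Fin 9) := rfl
@[simp] lemma finsucc_8_2 : Fin.succ ((2 : Fin 8)) = (3 : Fin 9) := rfl
@[simp] lemma finsucc_8_3 : Fin.succ ((3 : Fin 8)) = (4 : Fin 9) := rfl
@[simp] lemma finsucc_8_4 : Fin.succ ((4 : Fin 8)) = (5 : Fin 9) := rfl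
@[simp] lemma finsucc_8_5 : Fin.succ ((5 : Fin 8)) = (6 : Fin 9) := rfl
@[simp] lemma finsucc_8_6 : Fin.succ ((6 : Fin 8)) = (7 : Fin 9) := rfl
@[simp] lemma finsucc_8_7 : Fin.succ ((7 : Fin 8)) = (8 : Fin 9) := rfl

lemma wsum_mk (b : Fin 9 → ℝ) (b0 b1 b2 b3 b4 b5 b6 b7 b8 : Bool) :
    wsum b ![b0,b1,b2,b3,b4,b5,b6,b7,b8] =
      b 0 * sgn b0 + b 1 * sgn b1 + b 2 * sgn b2 + b 3 * sgn b3 + b 4 * sgn b4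
        + b 5 * sgn b5 + b 6 * sgn b6 + b 7 * sgn b7 + b 8 * sgn b8 := by
  simp [wsum, Fin.sum_univ_succ]
  ring

def pairs56 : List ((Fin 9 → Bool) × (Fin 9 → Bool)) := [
  (![true,true,true,true,true,true,true,true,true], ![true,true,true,false,false,false,false,false,false]),
  (![true,true,true,true,true,true,true,true,false], ![true,true,true,false,false,false,false,false,true]),
  (![true,true,true,true,true,true,true,false,true], ![true,true,true,false,false,false,false,true,false]),
  (![true,true,true,true,true,true,true,false,false], ![true,true,true,false,false,false,false,true,true]),
  (![true,true,true,true,true,true,false,true,true], ![true,true,true,false,false,false,true,false,false]),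
  (![true,true,true,true,true,true,false,true,false], ![true,true,true,false,false,false,true,false,true]),
  (![true,true,true,true,true,true,false,false,true], ![true,true,true,false,false,false,true,true,false]),
  (![true,true,true,true,true,true,false,false,false], ![true,true,true,false,false,false,true,true,true]),
  (![true,true,true,true,true,false,true,true,true], ![true,true,true,false,false,true,false,false,false]),
  (![true,true,true,true,true,false,true,true,false], ![true,true,true,false,false,true,false,false,true]),
  (![true,true,true,true,true,false,true,false,true], ![true,true,true,false,false,true,false,true,false]),
  (![true,true,true,true,true,false,true,false,false], ![true,true,true,false,false,true,false,true,true]),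
  (![true,true,true,true,true,false,false,true,true], ![true,true,true,false,false,true,true,false,false]),
  (![true,true,true,true,true,false,false,true,false], ![true,true,true,false,false,true,true,false,true]),
  (![true,true,true,true,true,false,false,false,true], ![true,true,true,false,false,true,true,true,false]),
  (![true,true,true,true,true,false,false,false,false], ![true,true,true,false,false,true,true,true,true]),
  (![true,true,true,true,false,true,true,true,true], ![true,true,true,false,true,false,false,false,false]),
  (![true,true,true,true,false,true,true,true,false], ![true,true,true,false,true,false,false,false,true]),
  (![true,true,true,true,false,true,true,false,true], ![true,true,true,false,true,false,false,true,false]),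
  (![true,true,true,true,false,true,true,false,false], ![true,true,true,false,true,false,false,true,true]),
  (![true,true,true,true,false,true,false,true,true], ![true,true,true,false,true,false,true,false,false]),
  (![true,true,true,true,false,true,false,true,false], ![true,true,true,false,true,false,true,false,true]),
  (![true,true,true,true,false,true,false,false,true], ![true,true,true,false,true,false,true,true,false]),
  (![true,true,true,true,false,true,false,false,false], ![true,true,true,false,true,false,true,true,true]),
  (![true,true,true,true,false,false,true,true,true], ![true,true,true,false,true,true,false,false,false]),
  (![true,true,true,true,false,false,true,true,false], ![true,true,true,false,true,true,false,false,true]),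
  (![true,true,true,true,false,false,true,false,true], ![true,true,true,false,true,true,false,true,false]),
  (![true,true,true,true,false,false,true,false,false], ![true,true,true,false,true,true,false,true,true]),
  (![true,true,true,true,false,false,false,true,true], ![true,true,true,false,true,true,true,false,false]),
  (![true,true,true,true,false,false,false,true,false], ![true,true,true,false,true,true,true,false,true]),
  (![true,true,true,true,false,false,false,false,true], ![true,true,true,false,true,true,true,true,false]),
  (![true,true,true,true,false,false,false,false,false], ![true,true,true,false,true,true,true,true,true]),
  (![true,true,false,true,true,true,true,true,true], ![true,true,false,true,true,false,true,false,false]),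
  (![true,true,false,true,true,true,true,true,false], ![true,true,false,true,false,true,false,true,true]),
  (![true,true,false,true,true,true,true,false,true], ![true,true,false,false,true,true,true,true,false]),
  (![true,true,false,true,true,true,true,false,false], ![true,false,true,true,true,true,true,false,true]),
  (![true,true,false,true,true,true,false,true,true], ![true,true,false,false,true,true,false,true,true]),
  (![true,true,false,true,true,true,false,true,false], ![false,true,true,true,true,true,true,false,true]),
  (![true,true,false,true,true,true,false,false,true], ![false,true,true,true,true,true,false,true,true]),
  (![true,true,false,true,true,true,false,false,false], ![true,false,true,true,true,true,true,true,true]),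
  (![true,true,false,true,true,false,true,true,true], ![true,false,true,true,true,false,false,true,true]),
  (![true,true,false,true,true,false,true,true,false], ![false,true,true,true,false,true,true,true,true]),
  (![true,true,false,true,true,false,true,false,true], ![false,true,true,false,true,true,true,true,true]),
  (![true,true,false,true,true,false,false,true,true], ![false,false,true,true,true,true,true,true,true]),
  (![true,true,false,true,true,false,false,true,false], ![false,true,true,true,true,true,true,true,true]),
  (![true,true,false,true,false,true,true,true,true], ![true,false,true,true,true,true,false,true,false]),
  (![true,true,false,true,false,true,true,true,false], ![true,false,true,true,true,true,false,true,true]),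
  (![true,true,false,true,false,true,true,false,true], ![true,false,true,true,true,false,true,true,true]),
  (![true,true,false,true,false,false,true,true,true], ![true,false,true,true,true,true,true,true,false]),
  (![true,true,false,false,true,true,true,true,true], ![true,false,true,true,true,false,true,false,true]),
  (![true,true,false,false,true,true,true,false,true], ![true,false,true,true,false,true,true,true,true]),
  (![true,true,false,false,true,false,true,true,true], ![true,false,false,true,true,true,true,true,true]),
  (![true,true,false,false,false,true,true,true,true], ![true,false,true,false,true,true,true,true,true]),
  (![true,false,true,true,true,true,true,false,false], ![false,true,true,true,true,true,true,true,false]),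
  (![true,false,true,true,true,true,false,false,true], ![false,true,false,true,true,true,true,true,true]),
  (![true,false,true,true,true,false,true,true,false], ![false,true,true,true,true,false,true,true,true])]

def pats112 : List (Fin 9 → Bool) := pairs56.flatMap (fun p => [p.1, p.2])

lemma pats112_nodup : pats112.Nodup := by decide

lemma sum_flat {α : Type*} [DecidableEq α] (g : α → ℕ) :
    ∀ L : List (α × α), (L.flatMap fun p => [p.1, p.2]).Nodup →
      ∑ σ ∈ (L.flatMap fun p => [p.1, p.2]).toFinset, g σ
        = (L.map fun p => g p.1 + g p.2).sum := by
  intro L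
  induction L with
  | nil => simp
  | cons p L ih =>
    intro h
    simp only [List.flatMap_cons, List.cons_append, List.nil_append] at h ⊢
    rw [List.nodup_cons] at h
    obtain ⟨h1, h⟩ := h
    rw [List.nodup_cons] at h
    obtain ⟨h2, h3⟩ := h
    simp only [List.toFinset_cons, List.map_cons, List.sum_cons]
    rw [Finset.sum_insert, Finset.sum_insert]
    · rw [ih h3]; ring
    · simpa using h2
    · simp only [Finset.mem_insert, List.mem_toFinset]
      push_neg
      constructor
      · intro he; exact h1 (he ▸ List.mem_cons_self)
      · intro he; exact h1 (List.mem_cons_of_mem _ he)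

lemma le_sum_map {β : Type*} (h : β → ℕ) (c : ℕ) :
    ∀ L : List β, (∀ x ∈ L, c ≤ h x) → c * L.length ≤ (L.map h).sum := by
  intro L
  induction L with
  | nil => simp
  | cons x L ih =>
    intro hx
    simp only [List.map_cons, List.sum_cons, List.length_cons, Nat.mul_succ]
    have := ih fun y hy => hx y (List.mem_cons_of_mem _ hy)
    have hx0 := hx x List.mem_cons_self
    omega

open scoped Classical

set_option maxRecDepth 10000 in
set_option maxHeartbeats 2000000 in
theorem caseC_a1_add_a2_add_a3_lt_one (n : ℕ) (hn : 9 ≤ n) (a : Fin n → ℝ)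
    (hmono : ∀ i j : Fin n, i ≤ j → a j ≤ a i) (hpos : ∀ i, 0 < a i)
    (hnorm : ∑ i, (a i) ^ 2 = 1)
    (hclose : ∀ i : Fin n, (i : ℕ) < 9 → |a i - 1 / 3| ≤ 0.07)
    (hX : radProb a (fun x => x ≥ 1) < 7 / 64) :
    a ⟨0, by omega⟩ + a ⟨1, by omega⟩ + a ⟨2, by omega⟩ < 1 := by
  by_contra hcon
  push_neg at hcon
  set b : Fin 9 → ℝ := fun j => a (Fin.castLE hn j) with hbdef
  have hb : ∀ j : Fin 9, 79/300 ≤ b j ∧ b j ≤ 121/300 := by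
    intro j
    have h := hclose (Fin.castLE hn j) (by simpa using j.2)
    rw [abs_le] at h
    norm_num at h
    constructor <;> [linarith [h.1]; linarith [h.2]]
  have hmon : ∀ j k : Fin 9, j ≤ k → b k ≤ b j := by
    intro j k hjk
    apply hmono
    simp only [Fin.le_def, Fin.coe_castLE]
    exact hjk
  have hs3 : 1 ≤ b 0 + b 1 + b 2 := hcon
  have h0 := hb 0
  have h1 := hb 1
  have h2 := hb 2
  have h3 := hb 3
  have h4 := hb 4
  have h5 := hb 5
  have h6 := hb 6
  have h7 := hb 7
  have h8 := hb 8
  have m01 : b 1 ≤ b 0 := hmon 0 1 (by decide)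
  have m12 : b 2 ≤ b 1 := hmon 1 2 (by decide)
  have m23 : b 3 ≤ b 2 := hmon 2 3 (by decide)
  have m34 : b 4 ≤ b 3 := hmon 3 4 (by decide)
  have m45 : b 5 ≤ b 4 := hmon 4 5 (by decide)
  have m56 : b 6 ≤ b 5 := hmon 5 6 (by decide)
  have m67 : b 7 ≤ b 6 := hmon 6 7 (by decide)
  have m78 : b 8 ≤ b 7 := hmon 7 8 (by decide)
  have hpair : ∀ p ∈ pairs56, 2 ≤ wsum b p.1 + wsum b p.2 := by
    intro p hp
    simp only [pairs56, List.mem_cons, List.not_mem_nil, or_false] at hp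
    rcases hp with rfl|rfl|rfl|rfl|rfl|rfl|rfl|rfl|rfl|rfl|rfl|rfl|rfl|rfl|rfl|rfl|rfl|rfl|rfl|rfl|rfl|rfl|rfl|rfl|rfl|rfl|rfl|rfl|rfl|rfl|rfl|rfl|rfl|rfl|rfl|rfl|rfl|rfl|rfl|rfl|rfl|rfl|rfl|rfl|rfl|rfl|rfl|rfl|rfl|rfl|rfl|rfl|rfl|rfl|rfl|rfl <;>
    · dsimp only
      rw [wsum_mk, wsum_mk]
      simp only [sgn_true, sgn_false]
      linarith [h0.1, h0.2, h1.1, h1.2, h2.1, h2.2, h3.1, h3.2, h4.1, h4.2, h5.1, h5.2,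
        h6.1, h6.2, h7.1, h7.2, h8.1, h8.2, m01, m12, m23, m34, m45, m56, m67, m78, hs3]
  set N : ℕ := (Finset.univ.filter fun ε : Fin n → Bool => 1 ≤ wsum a ε).card with hNdef
  have hN : 56 * 2^(n-9) ≤ N := by
    have e1 : N = ∑ σ : Fin 9 → Bool, cnt hn a σ := total_count hn a
    have e2 : ∑ σ ∈ pats112.toFinset, cnt hn a σ ≤ ∑ σ : Fin 9 → Bool, cnt hn a σ :=
      Finset.sum_le_sum_of_subset (Finset.subset_univ _)
    have e3 : ∑ σ ∈ pats112.toFinset, cnt hn a σ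
        = (pairs56.map fun p => cnt hn a p.1 + cnt hn a p.2).sum :=
      sum_flat _ pairs56 pats112_nodup
    have e4 : 2^(n-9) * pairs56.length
        ≤ (pairs56.map fun p => cnt hn a p.1 + cnt hn a p.2).sum := by
      refine le_sum_map _ _ _ fun p hp => ?_
      exact cnt_pair hn a (hpair p hp)
    have e5 : pairs56.length = 56 := by rfl
    rw [e5] at e4
    omega
  -- convert to the probability statement
  have hcard : Nat.card {ε : Fin n → Bool | wsum a ε ≥ 1} = N := by
    rw [Nat.card_eq_fintype_card, Fintype.card_subtype, hNdef]
    congr 1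
  have hrp : radProb a (fun x => x ≥ 1)
      = (Nat.card {ε : Fin n → Bool | wsum a ε ≥ 1} : ℝ) / 2^n := by
    unfold radProb
    rw [Fintype.card_fin]
    rfl
  have hNR : (56:ℝ) * 2^(n-9) ≤ (N : ℝ) := by exact_mod_cast hN
  have hsplit : (2:ℝ)^n = 2^9 * 2^(n-9) := by
    rw [← pow_add]
    congr 1
    omega
  have hpow : (0:ℝ) < 2^(n-9) := by positivity
  have hfin : (7:ℝ)/64 ≤ radProb a (fun x => x ≥ 1) := by
    rw [hrp, hcard]
    rw [div_le_div_iff₀ (by norm_num) (by positivity)]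
    calc (7:ℝ) * 2^n = 7 * (2^9 * 2^(n-9)) := by rw [hsplit]
      _ = 64 * (56 * 2^(n-9)) := by ring
      _ ≤ 64 * (N:ℝ) := by linarith
      _ = (N:ℝ) * 64 := by ring
  exact absurd hX (not_lt.2 hfin)
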